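/- Let x, y : Fin n → EuclideanSpace ℝ (Fin 3) be point configurations, and suppose there is a single multiset M of real numbers such that for every i ∈ Fin n, the multiset {dist (x i) (x j) : j ∈ Fin n} equals M and the multiset {dist (y i) (y j) : j ∈ Fin n} equals M. Then 1-WL-E fails to distinguish x and y; in fact, for every t, the relation R_t relates every pair of nodes of V = Fin n ⊕ Fin n (all nodes keep the same color at every iteration). -/

import Mathlib

noncomputable section OneWLE

/-- The position of a node of the disjoint union of the two configurations. -/
def WLpos {n m : ℕ} (x : Fin n → EuclideanSpace ℝ (Fin 3))
    (y : Fin m → EuclideanSpace ℝ (Fin 3)) :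
    Fin n ⊕ Fin m → EuclideanSpace ℝ (Fin 3) :=
  Sum.elim x y

/-- The node set of the side of a node `u` of the disjoint union. -/
def WLside (n m : ℕ) : Fin n ⊕ Fin m → Type
  | Sum.inl _ => Fin n
  | Sum.inr _ => Fin m

/-- Inclusion of a side into the disjoint union. -/
def WLemb {n m : ℕ} : (u : Fin n ⊕ Fin m) → WLside n m u → Fin n ⊕ Fin m
  | Sum.inl _, w => Sum.inl w
  | Sum.inr _, w => Sum.inr w

/-- The 1-WL-E (Vanilla DisGNN color refinement) relations `R_t` on the disjoint union
of two complete distance graphs, with trivial initial colors: `R_0` relates all pairs,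
and `u R_{t+1} v` iff `u R_t v` and there is a bijection `σ` between the side of `u`
and the side of `v` preserving distances to `u` resp. `v` and the relation `R_t`. -/
def WLRel {n m : ℕ} (x : Fin n → EuclideanSpace ℝ (Fin 3))
    (y : Fin m → EuclideanSpace ℝ (Fin 3)) :
    ℕ → (Fin n ⊕ Fin m) → (Fin n ⊕ Fin m) → Prop
  | 0, _, _ => True
  | t + 1, u, v => WLRel x y t u v ∧
      ∃ σ : WLside n m u ≃ WLside n m v, ∀ w : WLside n m u,
        dist (WLpos x y u) (WLpos x y (WLemb u w))
          = dist (WLpos x y v) (WLpos x y (WLemb v (σ w))) ∧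
        WLRel x y t (WLemb u w) (WLemb v (σ w))

end OneWLE


private lemma exists_perm_of_map_eq {n : ℕ} (f g : Fin n → ℝ)
    (h : Multiset.map f (Finset.univ : Finset (Fin n)).val
       = Multiset.map g (Finset.univ : Finset (Fin n)).val) :
    ∃ σ : Fin n ≃ Fin n, ∀ w, f w = g (σ w) := by
  have hperm : List.Perm (List.ofFn f) (List.ofFn g) := by
    rw [← Multiset.coe_eq_coe]
    simpa only [Fin.univ_val_map] using h
  have h1 : List.Perm (List.ofFn (f ∘ Tuple.sort f)) (List.ofFn (g ∘ Tuple.sort g)) :=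
    (((Tuple.sort f).ofFn_comp_perm f).trans hperm).trans
      ((Tuple.sort g).ofFn_comp_perm g).symm
  have heq : f ∘ Tuple.sort f = g ∘ Tuple.sort g :=
    List.ofFn_injective (List.Perm.eq_of_sortedLE
      (Tuple.monotone_sort f).sortedLE_ofFn (Tuple.monotone_sort g).sortedLE_ofFn h1)
  refine ⟨(Tuple.sort f).symm.trans (Tuple.sort g), fun w => ?_⟩
  simpa using congrFun heq ((Tuple.sort f).symm w)

/-- If every node of both configurations `x` and `y` has the same
unordered distance list `M`, then 1-WL-E fails to distinguish `x` and `y`: in fact,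
at every iteration `t`, the relation `R_t` relates every pair of nodes of
`V = Fin n ⊕ Fin n` (all nodes keep the same color at every iteration). -/
theorem wlRel_top_of_same_distance_lists (n : ℕ)
    (x y : Fin n → EuclideanSpace ℝ (Fin 3)) (M : Multiset ℝ)
    (hx : ∀ i : Fin n,
      Multiset.map (fun j => dist (x i) (x j)) (Finset.univ : Finset (Fin n)).val = M)
    (hy : ∀ i : Fin n,
      Multiset.map (fun j => dist (y i) (y j)) (Finset.univ : Finset (Fin n)).val = M) :
    ∀ (t : ℕ) (u v : Fin n ⊕ Fin n), WLRel x y t u v := by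
  intro t
  induction t with
  | zero => intro u v; trivial
  | succ t ih =>
    intro u v
    refine ⟨ih u v, ?_⟩
    rcases u with i | i <;> rcases v with k | k
    · obtain ⟨σ, hσ⟩ := exists_perm_of_map_eq (fun j => dist (x i) (x j))
        (fun j => dist (x k) (x j)) (by rw [hx i, hx k])
      exact ⟨σ, fun w => ⟨hσ w, ih _ _⟩⟩
    · obtain ⟨σ, hσ⟩ := exists_perm_of_map_eq (fun j => dist (x i) (x j))
        (fun j => dist (y k) (y j)) (by rw [hx i, hy k])
      exact ⟨σ, fun w => ⟨hσ w, ih _ _⟩⟩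
    · obtain ⟨σ, hσ⟩ := exists_perm_of_map_eq (fun j => dist (y i) (y j))
        (fun j => dist (x k) (x j)) (by rw [hy i, hx k])
      exact ⟨σ, fun w => ⟨hσ w, ih _ _⟩⟩
    · obtain ⟨σ, hσ⟩ := exists_perm_of_map_eq (fun j => dist (y i) (y j))
        (fun j => dist (y k) (y j)) (by rw [hy i, hy k])
      exact ⟨σ, fun w => ⟨hσ w, ih _ _⟩⟩
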